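/- If f ∈ ℝ[x] and the derivative f′ is divisible by η in ℝ[x], then f belongs to the stabilizer ring of U; that is, for every p ∈ U the product f·p again lies in U. -/

import Mathlib

noncomputable section

/-- Physicists' Hermite polynomials indexed by naturals. -/
def hermN : ℕ → Polynomial ℝ
  | 0 => 1
  | 1 => Polynomial.C 2 * Polynomial.X
  | (n + 2) => Polynomial.C 2 * Polynomial.X * hermN (n + 1)
      - Polynomial.C (2 * ((n : ℝ) + 1)) * hermN n

/-- Physicists' Hermite polynomials indexed by integers, `0` for negative index. -/
def Herm (n : ℤ) : Polynomial ℝ := if 0 ≤ n then hermN n.toNat else 0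

/-- Hermite polynomial as a real function. -/
def H (n : ℤ) : ℝ → ℝ := fun x => (Herm n).eval x

/-- The Wronskian determinant of a finite family of functions. -/
def Wr {m : ℕ} (f : Fin m → ℝ → ℝ) (x : ℝ) : ℝ :=
  Matrix.det (Matrix.of fun i j : Fin m => iteratedDeriv (j : ℕ) (f i) x)

/-- `N = (Σ_{i=1}^l k_i) - l(l-1)/2`. -/
def Nval (k : ℕ → ℕ) (l : ℕ) : ℤ :=
  (∑ i ∈ Finset.range l, (k (i + 1) : ℤ)) - (l * (l - 1) / 2 : ℕ)

/-- The Wronskian of a finite family of polynomials. -/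
def WrP {m : ℕ} (f : Fin m → Polynomial ℝ) : Polynomial ℝ :=
  Matrix.det (Matrix.of fun i j : Fin m => (Polynomial.derivative)^[j.1] (f i))

/-- `η = Wr[H_{k 1}, …, H_{k l}]` as a polynomial. -/
def etaP (k : ℕ → ℕ) (l : ℕ) : Polynomial ℝ :=
  WrP (fun i : Fin l => Herm (k (i.1 + 1) : ℤ))

/-- The exceptional Hermite polynomial `ĥ(n) = Wr[H_{k 1},…,H_{k l}, H_{n+l-N}]`
as a polynomial. -/
def hhatP (k : ℕ → ℕ) (l : ℕ) (n : ℤ) : Polynomial ℝ :=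
  WrP (Fin.snoc (fun i : Fin l => Herm (k (i.1 + 1) : ℤ)) (Herm (n + l - Nval k l)))

/-- The degree set `I = {n : N - l ≤ n, n + l - N ∉ {k_1,…,k_l}}`. -/
def Iset (k : ℕ → ℕ) (l : ℕ) : Set ℤ :=
  {n | Nval k l - l ≤ n ∧ ∀ i, 1 ≤ i → i ≤ l → n + l - Nval k l ≠ (k i : ℤ)}

/-- `U`: the linear span of the exceptional Hermite polynomials. -/
def Uspan (k : ℕ → ℕ) (l : ℕ) : Submodule ℝ (Polynomial ℝ) :=
  Submodule.span ℝ ((fun n => hhatP k l n) '' Iset k l)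

namespace Stab
open Polynomial Matrix Finset

abbrev PR := Polynomial ℝ

/-- iterated derivative -/
def dv (j : ℕ) (p : PR) : PR := (Polynomial.derivative (R := ℝ))^[j] p

lemma dv_zero (p : PR) : dv 0 p = p := rfl

lemma dv_deriv (j : ℕ) (p : PR) : dv (j+1) p = Polynomial.derivative (dv j p) := by
  simp [dv, Function.iterate_succ_apply']

lemma dv_add (j : ℕ) (p q : PR) : dv j (p + q) = dv j p + dv j q := by
  induction j with
  | zero => rfl
  | succ j ih => simp [dv_deriv, ih]

lemma dv_smul (j : ℕ) (c : ℝ) (p : PR) : dv j (c • p) = c • dv j p := by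
  induction j with
  | zero => rfl
  | succ j ih => simp [dv_deriv, ih]

/-- jet matrix of a family -/
def jetM (G : ℕ → PR) (m : ℕ) : Matrix (Fin m) (Fin m) PR :=
  Matrix.of fun i j => dv j.1 (G i.1)

/-- Wronskian of the first `m` members -/
def Wm (G : ℕ → PR) (m : ℕ) : PR := (jetM G m).det

def famA (G : ℕ → PR) (m : ℕ) (b : PR) : ℕ → PR := fun t => if t < m then G t else b

/-- Wronskian of first `m` members with `b` appended -/
def Sm (G : ℕ → PR) (m : ℕ) (b : PR) : PR := Wm (famA G m b) (m+1)

def famR (G : ℕ → PR) (j : ℕ) (b : PR) : ℕ → PR := fun t => if t = j then b else G t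

/-- Wronskian of first `l` members with member `j` replaced by `b` -/
def Vm (G : ℕ → PR) (l j : ℕ) (b : PR) : PR := Wm (famR G j b) l

lemma Wm_congr {G G' : ℕ → PR} {m : ℕ} (h : ∀ t < m, G t = G' t) : Wm G m = Wm G' m := by
  unfold Wm jetM
  congr 1
  ext i j
  simp [h i.1 i.2]

lemma Wm_zero (G : ℕ → PR) : Wm G 0 = 1 := Matrix.det_fin_zero

lemma Sm_FF (G : ℕ → PR) (m : ℕ) : Sm G m (G m) = Wm G (m+1) := by
  apply Wm_congr
  intro t ht
  unfold famA
  by_cases h : t < m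
  · simp [h]
  · have : t = m := by omega
    simp [this]

lemma Sm_dup (G : ℕ → PR) (m : ℕ) {r : ℕ} (hr : r < m) : Sm G m (G r) = 0 := by
  unfold Sm Wm
  apply Matrix.det_zero_of_row_eq (i := ⟨r, by omega⟩) (j := Fin.last m)
  · simp [Fin.ext_iff, Fin.last]; omega
  · funext j
    simp only [jetM, Matrix.of_apply, famA, Fin.last]
    have h1 : r < m := hr
    simp [h1]

lemma Vm_self (G : ℕ → PR) (l j : ℕ) : Vm G l j (G j) = Wm G l := by
  apply Wm_congr
  intro t _
  unfold famR
  by_cases h : t = j <;> simp [h]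

lemma Vm_dup (G : ℕ → PR) {l j r : ℕ} (hj : j < l) (hr : r < l) (hne : j ≠ r) :
    Vm G l j (G r) = 0 := by
  unfold Vm Wm
  apply Matrix.det_zero_of_row_eq (i := ⟨j, hj⟩) (j := ⟨r, hr⟩)
  · simp [Fin.ext_iff]; omega
  · funext c
    simp only [jetM, Matrix.of_apply, famR]
    simp [hne, Ne.symm hne]

lemma Sm_zero_fam (G : ℕ → PR) (b : PR) : Sm G 0 b = b := by
  unfold Sm Wm jetM famA
  rw [show (1 : ℕ) = 0 + 1 from rfl]
  rw [Matrix.det_fin_one]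
  simp [dv_zero]

end Stab
namespace Stab
open Polynomial Matrix Finset

/-- coefficients of the operator `b ↦ Sm G m b` -/
def sc (G : ℕ → PR) (m : ℕ) (j : ℕ) : PR :=
  if h : j < m+1 then
    (-1)^(m + j) *
      ((jetM (famA G m 0) (m+1)).submatrix (Fin.last m).succAbove
        (⟨j, h⟩ : Fin (m+1)).succAbove).det
  else 0

lemma sc_big {G : ℕ → PR} {m j : ℕ} (h : m+1 ≤ j) : sc G m j = 0 := by
  unfold sc
  rw [dif_neg (by omega)]

lemma Sm_op (G : ℕ → PR) (m : ℕ) (b : PR) :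
    Sm G m b = ∑ j ∈ range (m+1), sc G m j * dv j b := by
  unfold Sm Wm
  rw [Matrix.det_succ_row _ (Fin.last m)]
  rw [show (∑ j ∈ range (m+1), sc G m j * dv j b)
      = ∑ j : Fin (m+1), sc G m j.1 * dv j.1 b from
    (Fin.sum_univ_eq_sum_range (fun j => sc G m j * dv j b) (m+1)).symm]
  apply Finset.sum_congr rfl
  intro j _
  have hj : j.1 < m + 1 := j.2
  conv_rhs => rw [show j = (⟨j.1, hj⟩ : Fin (m+1)) from rfl]
  unfold sc
  rw [dif_pos hj]
  have e1 : jetM (famA G m b) (m + 1) (Fin.last m) ⟨j.1, hj⟩ = dv j.1 b := by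
    simp only [jetM, Matrix.of_apply, famA, Fin.last]
    simp
  have e2 : ((jetM (famA G m b) (m+1)).submatrix (Fin.last m).succAbove
      (⟨j.1, hj⟩ : Fin (m+1)).succAbove).det
      = ((jetM (famA G m 0) (m+1)).submatrix (Fin.last m).succAbove
      (⟨j.1, hj⟩ : Fin (m+1)).succAbove).det := by
    congr 1
    refine Matrix.ext fun i' j' => ?_
    simp only [Matrix.submatrix_apply, jetM, Matrix.of_apply, famA, Fin.succAbove_last]
    have : (Fin.castSucc i').1 < m := i'.2
    simp [this]
  rw [e1, e2, Fin.last]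
  ring

lemma sc_top (G : ℕ → PR) (m : ℕ) : sc G m m = Wm G m := by
  unfold sc
  rw [dif_pos (by omega)]
  have hl : (⟨m, by omega⟩ : Fin (m+1)) = Fin.last m := rfl
  rw [hl]
  have e : ((jetM (famA G m 0) (m+1)).submatrix (Fin.last m).succAbove
      (Fin.last m).succAbove) = jetM G m := by
    refine Matrix.ext fun i j => ?_
    simp only [Matrix.submatrix_apply, jetM, Matrix.of_apply, famA, Fin.succAbove_last]
    have : (Fin.castSucc i).1 < m := i.2
    simp [this]
  rw [e]
  have h1 : (-1 : PR)^(m+m) = 1 := by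
    rw [← two_mul, pow_mul]
    norm_num
  rw [h1, one_mul, Wm]

/-- coefficients of the operator `b ↦ Vm G (L+1) j b` -/
def vc (G : ℕ → PR) (L j c : ℕ) : PR :=
  if hj : j < L+1 then
    if hc : c < L+1 then
      (-1)^(j + c) *
        ((jetM (famR G j 0) (L+1)).submatrix (⟨j, hj⟩ : Fin (L+1)).succAbove
          (⟨c, hc⟩ : Fin (L+1)).succAbove).det
    else 0
  else 0

lemma Vm_op (G : ℕ → PR) (L : ℕ) {j : ℕ} (hj : j < L+1) (b : PR) :
    Vm G (L+1) j b = ∑ c ∈ range (L+1), vc G L j c * dv c b := by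
  unfold Vm Wm
  rw [Matrix.det_succ_row _ ⟨j, hj⟩]
  rw [show (∑ c ∈ range (L+1), vc G L j c * dv c b)
      = ∑ c : Fin (L+1), vc G L j c.1 * dv c.1 b from
    (Fin.sum_univ_eq_sum_range (fun c => vc G L j c * dv c b) (L+1)).symm]
  apply Finset.sum_congr rfl
  intro c _
  have hc : c.1 < L + 1 := c.2
  conv_rhs => rw [show c = (⟨c.1, hc⟩ : Fin (L+1)) from rfl]
  unfold vc
  rw [dif_pos hj, dif_pos hc]
  have e1 : jetM (famR G j b) (L + 1) ⟨j, hj⟩ ⟨c.1, hc⟩ = dv c.1 b := by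
    simp [jetM, famR]
  have e2 : ((jetM (famR G j b) (L+1)).submatrix (⟨j, hj⟩ : Fin (L+1)).succAbove
      (⟨c.1, hc⟩ : Fin (L+1)).succAbove).det
      = ((jetM (famR G j 0) (L+1)).submatrix (⟨j, hj⟩ : Fin (L+1)).succAbove
      (⟨c.1, hc⟩ : Fin (L+1)).succAbove).det := by
    congr 1
    refine Matrix.ext fun i' j' => ?_
    simp only [Matrix.submatrix_apply, jetM, Matrix.of_apply, famR]
    have : ((⟨j, hj⟩ : Fin (L+1)).succAbove i').1 ≠ j := by
      intro hcon
      exact (⟨j, hj⟩ : Fin (L+1)).succAbove_ne i' (Fin.ext hcon)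
    simp [this]
  rw [e1, e2]
  ring

/-- if the jet determinant is nonzero, an operator killing the family is zero -/
lemma kill (G : ℕ → PR) (m : ℕ) (hdet : Wm G m ≠ 0) (c : Fin m → PR)
    (h : ∀ r : Fin m, ∑ j : Fin m, dv j.1 (G r.1) * c j = 0) : ∀ j, c j = 0 := by
  have h0 : (jetM G m).mulVec c = 0 := by
    funext r
    simpa [Matrix.mulVec, dotProduct, jetM] using h r
  have h1 := congrArg (Matrix.mulVec (Matrix.adjugate (jetM G m))) h0
  rw [Matrix.mulVec_mulVec, Matrix.adjugate_mul, Matrix.smul_mulVec,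
    Matrix.one_mulVec, Matrix.mulVec_zero] at h1
  intro j
  have h2 : (jetM G m).det * c j = 0 := congrFun h1 j
  rcases mul_eq_zero.mp h2 with h3 | h3
  · exact absurd h3 hdet
  · exact h3

end Stab
namespace Stab
open Polynomial Matrix Finset

lemma jacobi (G : ℕ → PR) (m : ℕ) (hW : Wm G (m+1) ≠ 0) (b : PR) :
    Wm G m * Sm G (m+1) b
      = Wm G (m+1) * Polynomial.derivative (Sm G m b)
        - Polynomial.derivative (Wm G (m+1)) * Sm G m b := by
  set W0 := Wm G m with hW0
  set W1 := Wm G (m+1) with hW1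
  set shift : ℕ → PR := fun j => if j = 0 then 0 else sc G m (j-1) with hshift
  set c : ℕ → PR := fun j => W0 * sc G (m+1) j
      - W1 * (Polynomial.derivative (sc G m j) + shift j)
      + Polynomial.derivative W1 * sc G m j with hc
  have hSmext : ∀ b' : PR, Sm G m b' = ∑ j ∈ range (m+2), sc G m j * dv j b' := by
    intro b'
    rw [Sm_op, Finset.sum_range_succ (n := m+1), sc_big (le_refl (m+1))]
    simp
  have key : ∀ b' : PR,
      W0 * Sm G (m+1) b' - (W1 * Polynomial.derivative (Sm G m b')
        - Polynomial.derivative W1 * Sm G m b')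
      = ∑ j ∈ range (m+2), c j * dv j b' := by
    intro b'
    have hA : Sm G (m+1) b' = ∑ j ∈ range (m+2), sc G (m+1) j * dv j b' := Sm_op G (m+1) b'
    have hB := hSmext b'
    have hdB : Polynomial.derivative (Sm G m b')
        = ∑ j ∈ range (m+2), (Polynomial.derivative (sc G m j) * dv j b'
            + sc G m j * dv (j+1) b') := by
      rw [hB, map_sum]
      apply Finset.sum_congr rfl
      intro j _
      rw [Polynomial.derivative_mul, dv_deriv]
    have h3 : shift (m+2) = 0 := by
      simp only [hshift]
      rw [if_neg (by omega)]
      exact sc_big (by omega)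
    have h4 : ∀ j, shift (j+1) = sc G m j := by
      intro j; simp [hshift]
    have h0 : shift 0 = 0 := by simp [hshift]
    have hshiftsum : ∑ j ∈ range (m+2), sc G m j * dv (j+1) b'
        = ∑ j ∈ range (m+2), shift j * dv j b' := by
      calc ∑ j ∈ range (m+2), sc G m j * dv (j+1) b'
          = ∑ j ∈ range (m+2), shift (j+1) * dv (j+1) b' := by
            apply Finset.sum_congr rfl; intro j _; rw [h4]
        _ = (∑ j ∈ range (m+2), shift (j+1) * dv (j+1) b') + shift 0 * dv 0 b' := by
            rw [h0, zero_mul, add_zero]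
        _ = ∑ j ∈ range (m+3), shift j * dv j b' :=
            (Finset.sum_range_succ' (fun j => shift j * dv j b') (m+2)).symm
        _ = (∑ j ∈ range (m+2), shift j * dv j b') + shift (m+2) * dv (m+2) b' :=
            Finset.sum_range_succ _ _
        _ = ∑ j ∈ range (m+2), shift j * dv j b' := by rw [h3, zero_mul, add_zero]
    rw [hdB, hA, hB]
    simp only [Finset.mul_sum, mul_add]
    rw [Finset.sum_add_distrib]
    have hC : ∑ j ∈ range (m+2), W1 * (sc G m j * dv (j+1) b')
        = ∑ j ∈ range (m+2), W1 * (shift j * dv j b') := by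
      rw [← Finset.mul_sum, ← Finset.mul_sum, hshiftsum]
    rw [hC]
    rw [← Finset.sum_add_distrib, ← Finset.sum_sub_distrib, ← Finset.sum_sub_distrib]
    apply Finset.sum_congr rfl
    intro j _
    simp only [hc]
    ring
  have ctop : c (m+1) = 0 := by
    simp only [hc, hshift]
    rw [sc_top, sc_big (le_refl (m+1)), if_neg (by omega)]
    simp only [Nat.add_sub_cancel, sc_top]
    rw [← hW0, ← hW1]
    simp
    ring
  have crest : ∀ r : Fin (m+1), ∑ j ∈ range (m+2), c j * dv j (G r.1) = 0 := by
    intro r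
    have hk := key (G r.1)
    have e1 : Sm G (m+1) (G r.1) = 0 := Sm_dup G (m+1) r.2
    rcases Nat.lt_or_ge r.1 m with hr | hr
    · have e2 : Sm G m (G r.1) = 0 := Sm_dup G m hr
      rw [e1, e2] at hk
      simp at hk
      exact hk.symm
    · have hrm : r.1 = m := by omega
      have e2 : Sm G m (G r.1) = W1 := by rw [hrm]; exact Sm_FF G m
      rw [e1, e2] at hk
      simp at hk
      rw [← hk]
      ring
  have hcz : ∀ j ∈ range (m+2), c j = 0 := by
    have hfin : ∀ j : Fin (m+1), c j.1 = 0 := by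
      apply kill G (m+1) hW
      intro r
      have := crest r
      rw [Finset.sum_range_succ, ctop, zero_mul, add_zero] at this
      rw [show (∑ j : Fin (m+1), dv j.1 (G r.1) * c j.1)
          = ∑ j ∈ range (m+1), dv j (G r.1) * c j from
        Fin.sum_univ_eq_sum_range (fun j => dv j (G r.1) * c j) (m+1)]
      rw [← this]
      apply Finset.sum_congr rfl
      intro j _
      ring
    intro j hj
    rw [Finset.mem_range] at hj
    rcases Nat.lt_or_ge j (m+1) with h | h
    · exact hfin ⟨j, h⟩
    · have : j = m+1 := by omega
      rw [this]; exact ctop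
  have := key b
  rw [Finset.sum_eq_zero (fun j hj => by rw [hcz j hj, zero_mul])] at this
  exact sub_eq_zero.mp this
end Stab
namespace Stab
open Polynomial Matrix Finset

lemma Sm_op_ext (G : ℕ → PR) {t M : ℕ} (htM : t + 1 ≤ M) (b : PR) :
    Sm G t b = ∑ j ∈ range M, sc G t j * dv j b := by
  rw [Sm_op]
  apply Finset.sum_subset (Finset.range_subset_range.mpr htM)
  intro j _ hj
  rw [Finset.mem_range, not_lt] at hj
  rw [sc_big hj, zero_mul]

lemma dagger (G : ℕ → PR) (L t : ℕ) (ht : t ≤ L) (hW : Wm G (L+1) ≠ 0) (b : PR) :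
    ∑ j ∈ range (L+1), Vm G (L+1) j b * Sm G t (G j) = Wm G (L+1) * Sm G t b := by
  set c : ℕ → PR := fun cc =>
    (∑ j ∈ range (L+1), vc G L j cc * Sm G t (G j)) - Wm G (L+1) * sc G t cc with hc
  have key : ∀ b' : PR,
      (∑ j ∈ range (L+1), Vm G (L+1) j b' * Sm G t (G j)) - Wm G (L+1) * Sm G t b'
        = ∑ cc ∈ range (L+1), c cc * dv cc b' := by
    intro b'
    have hS : Sm G t b' = ∑ cc ∈ range (L+1), sc G t cc * dv cc b' :=
      Sm_op_ext G (by omega) b'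
    have hV : ∑ j ∈ range (L+1), Vm G (L+1) j b' * Sm G t (G j)
        = ∑ cc ∈ range (L+1), (∑ j ∈ range (L+1), vc G L j cc * Sm G t (G j)) * dv cc b' := by
      calc ∑ j ∈ range (L+1), Vm G (L+1) j b' * Sm G t (G j)
          = ∑ j ∈ range (L+1), ∑ cc ∈ range (L+1),
              (vc G L j cc * Sm G t (G j)) * dv cc b' := by
            apply Finset.sum_congr rfl
            intro j hj
            rw [Finset.mem_range] at hj
            rw [Vm_op G L hj, Finset.sum_mul]
            apply Finset.sum_congr rfl
            intro cc _
            ring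
        _ = ∑ cc ∈ range (L+1), ∑ j ∈ range (L+1),
              (vc G L j cc * Sm G t (G j)) * dv cc b' := Finset.sum_comm
        _ = ∑ cc ∈ range (L+1), (∑ j ∈ range (L+1), vc G L j cc * Sm G t (G j)) * dv cc b' := by
            apply Finset.sum_congr rfl
            intro cc _
            rw [Finset.sum_mul]
    rw [hV, hS, Finset.mul_sum, ← Finset.sum_sub_distrib]
    apply Finset.sum_congr rfl
    intro cc _
    simp only [hc]
    ring
  have hvals : ∀ r : Fin (L+1), ∑ cc ∈ range (L+1), c cc * dv cc (G r.1) = 0 := by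
    intro r
    have hk := key (G r.1)
    have hsingle : ∑ j ∈ range (L+1), Vm G (L+1) j (G r.1) * Sm G t (G j)
        = Wm G (L+1) * Sm G t (G r.1) := by
      rw [Finset.sum_eq_single_of_mem r.1 (Finset.mem_range.mpr r.2)]
      · rw [Vm_self]
      · intro j hj hne
        rw [Finset.mem_range] at hj
        rw [Vm_dup G hj r.2 hne, zero_mul]
    rw [hsingle, sub_self] at hk
    exact hk.symm
  have hcz : ∀ cc ∈ range (L+1), c cc = 0 := by
    have hfin : ∀ j : Fin (L+1), c j.1 = 0 := by
      apply kill G (L+1) hW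
      intro r
      have := hvals r
      rw [show (∑ j : Fin (L+1), dv j.1 (G r.1) * c j.1)
          = ∑ j ∈ range (L+1), dv j (G r.1) * c j from
        Fin.sum_univ_eq_sum_range (fun j => dv j (G r.1) * c j) (L+1)]
      rw [← this]
      apply Finset.sum_congr rfl
      intro j _
      ring
    intro cc hcc
    rw [Finset.mem_range] at hcc
    exact hfin ⟨cc, hcc⟩
  have hthis := key b
  have hz : ∑ cc ∈ range (L+1), c cc * dv cc b = 0 :=
    Finset.sum_eq_zero (fun cc hcc => by rw [hcz cc hcc, zero_mul])
  rw [hz] at hthis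
  exact sub_eq_zero.mp hthis

end Stab
namespace Stab
open Polynomial Matrix Finset

lemma coeff_prod_bound {ι : Type*} (s : Finset ι) (f : ι → PR) (e : ι → ℕ)
    (h : ∀ i ∈ s, (f i).natDegree ≤ e i) :
    (∏ i ∈ s, f i).coeff (∑ i ∈ s, e i) = ∏ i ∈ s, (f i).coeff (e i) := by
  classical
  induction s using Finset.induction_on with
  | empty => simp
  | insert a s' ha ih =>
    rw [Finset.prod_insert ha, Finset.sum_insert ha, Finset.prod_insert ha]
    rw [Polynomial.coeff_mul_add_eq_of_natDegree_le (h a (Finset.mem_insert_self a s'))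
      ((Polynomial.natDegree_prod_le _ _).trans
        (Finset.sum_le_sum (fun i hi => h i (Finset.mem_insert_of_mem hi))))]
    rw [ih (fun i hi => h i (Finset.mem_insert_of_mem hi))]

lemma Wm_ne_zero (G : ℕ → PR) (d : ℕ → ℕ) (m : ℕ)
    (hdeg : ∀ t < m, (G t).natDegree = d t)
    (hG : ∀ t < m, G t ≠ 0)
    (hmono : ∀ s t, s < t → t < m → d s < d t) : Wm G m ≠ 0 := by
  classical
  have hd_ge : ∀ t < m, t ≤ d t := by
    intro t
    induction t with
    | zero => omega
    | succ n ih =>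
      intro h
      have h1 : n ≤ d n := ih (by omega)
      have h2 : d n < d (n+1) := hmono n (n+1) (by omega) h
      omega
  set D : ℕ := ∑ t ∈ range m, (d t - t) with hD
  set Lc : ℝ := ∏ i : Fin m, (G i.1).leadingCoeff with hLc
  set B : Matrix (Fin m) (Fin m) ℝ :=
    Matrix.of fun i j => ((d i.1).descFactorial j.1 : ℝ) with hB
  have hDs : D = (∑ i : Fin m, d i.1) - (∑ i : Fin m, i.1) := by
    rw [hD, ← Fin.sum_univ_eq_sum_range (fun t => d t - t) m]
    rw [Finset.sum_tsub_distrib _ (fun i _ => hd_ge i.1 i.2)]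
  have hterm : ∀ σ : Equiv.Perm (Fin m),
      (∏ i : Fin m, dv i.1 (G (σ i).1)).coeff D
        = ∏ i : Fin m, (((d (σ i).1).descFactorial i.1 : ℝ) * (G (σ i).1).leadingCoeff) := by
    intro σ
    by_cases hcase : ∀ i : Fin m, i.1 ≤ d (σ i).1
    · have hDs2 : D = ∑ i : Fin m, (d (σ i).1 - i.1) := by
        rw [Finset.sum_tsub_distrib _ (fun i _ => hcase i), hDs]
        congr 1
        exact (Equiv.sum_comp σ (fun i => d i.1)).symm
      rw [hDs2, coeff_prod_bound _ _ _ (fun i _ => by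
        unfold dv
        exact (Polynomial.natDegree_iterate_derivative _ _).trans
          (by rw [hdeg _ (σ i).2]))]
      apply Finset.prod_congr rfl
      intro i _
      unfold dv
      rw [Polynomial.coeff_iterate_derivative]
      have he : d (σ i).1 - i.1 + i.1 = d (σ i).1 := by
        have := hcase i; omega
      rw [he, ← hdeg _ (σ i).2, Polynomial.coeff_natDegree, nsmul_eq_mul]
    · push_neg at hcase
      obtain ⟨i0, hi0⟩ := hcase
      have hz : dv i0.1 (G (σ i0).1) = 0 := by
        unfold dv
        apply Polynomial.iterate_derivative_eq_zero
        rw [hdeg _ (σ i0).2]; exact hi0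
      rw [Finset.prod_eq_zero (Finset.mem_univ i0) hz]
      rw [Finset.prod_eq_zero (Finset.mem_univ i0)]
      · simp
      · rw [Nat.descFactorial_eq_zero_iff_lt.mpr hi0]
        simp
  have hcoeff : (Wm G m).coeff D = Lc * B.det := by
    rw [Wm, Matrix.det_apply', Polynomial.finset_sum_coeff]
    have step : ∀ σ : Equiv.Perm (Fin m),
        ((Equiv.Perm.sign σ : ℤ) * ∏ i : Fin m, jetM G m (σ i) i : PR).coeff D
          = Lc * (((Equiv.Perm.sign σ : ℤ) : ℝ) * ∏ i : Fin m, B (σ i) i) := by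
      intro σ
      have hj : (∏ i : Fin m, jetM G m (σ i) i) = ∏ i : Fin m, dv i.1 (G (σ i).1) := rfl
      rw [hj, ← Polynomial.C_eq_intCast, Polynomial.coeff_C_mul, hterm σ,
        Finset.prod_mul_distrib]
      have hprodlc : (∏ i : Fin m, (G (σ i).1).leadingCoeff) = Lc := by
        rw [hLc]
        exact Equiv.prod_comp σ (fun i => (G i.1).leadingCoeff)
      have hBd : (∏ i : Fin m, ((d (σ i).1).descFactorial i.1 : ℝ))
          = ∏ i : Fin m, B (σ i) i := rfl
      rw [hprodlc, hBd]
      ring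
    rw [Finset.sum_congr rfl (fun σ _ => step σ), ← Finset.mul_sum,
      Matrix.det_apply' B]
  have hLcne : Lc ≠ 0 := by
    rw [hLc]
    apply Finset.prod_ne_zero_iff.mpr
    intro i _
    exact Polynomial.leadingCoeff_ne_zero.mpr (hG i.1 i.2)
  have hBdet : B.det ≠ 0 := by
    have hform : B = Matrix.of fun i j : Fin m =>
        ((descPochhammer ℝ j.1).eval ((d i.1 : ℝ))) := by
      refine Matrix.ext fun i j => ?_
      simp only [hB, Matrix.of_apply]
      rw [descPochhammer_eval_eq_descFactorial]
    rw [hform, ← Matrix.det_eval_matrixOfPolynomials_eq_det_vandermonde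
      (fun i : Fin m => (d i.1 : ℝ)) (fun j : Fin m => descPochhammer ℝ j.1)
      (fun j => descPochhammer_natDegree (R := ℝ) j.1)
      (fun j => monic_descPochhammer (R := ℝ) j.1)]
    rw [Matrix.det_vandermonde_ne_zero_iff]
    intro a b hab
    have : d a.1 = d b.1 := Nat.cast_injective hab
    by_contra hne
    rcases Fin.lt_or_lt_of_ne hne with h | h
    · exact absurd this (Nat.ne_of_lt (hmono a.1 b.1 h b.2))
    · exact absurd this.symm (Nat.ne_of_lt (hmono b.1 a.1 h a.2))
  intro hzero
  rw [hzero, Polynomial.coeff_zero] at hcoeff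
  exact (mul_ne_zero hLcne hBdet) hcoeff.symm

end Stab
namespace Stab
open Polynomial Matrix Finset

lemma hermN_deg : ∀ n : ℕ, (hermN n).natDegree = n ∧ (hermN n).coeff n = 2^n
  | 0 => by constructor <;> simp [hermN]
  | 1 => by
      constructor
      · show (Polynomial.C 2 * Polynomial.X : PR).natDegree = 1
        rw [Polynomial.natDegree_C_mul (by norm_num), Polynomial.natDegree_X]
      · show (Polynomial.C 2 * Polynomial.X : PR).coeff 1 = 2^1
        rw [Polynomial.coeff_C_mul, Polynomial.coeff_X_one]
        norm_num
  | (n+2) => by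
      obtain ⟨h1d, h1c⟩ := hermN_deg (n+1)
      obtain ⟨h0d, h0c⟩ := hermN_deg n
      have hco : (hermN (n+2)).coeff (n+2) = 2^(n+2) := by
        show (Polynomial.C 2 * Polynomial.X * hermN (n + 1)
          - Polynomial.C (2 * ((n : ℝ) + 1)) * hermN n).coeff (n+2) = (2^(n+2) : ℝ)
        rw [Polynomial.coeff_sub, Polynomial.coeff_C_mul, mul_assoc,
          Polynomial.coeff_C_mul, Polynomial.coeff_X_mul, h1c,
          Polynomial.coeff_eq_zero_of_natDegree_lt (by omega : (hermN n).natDegree < n+2)]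
        ring
      have hdegle : (hermN (n+2)).natDegree ≤ n+2 := by
        show (Polynomial.C 2 * Polynomial.X * hermN (n + 1)
          - Polynomial.C (2 * ((n : ℝ) + 1)) * hermN n).natDegree ≤ n+2
        apply (Polynomial.natDegree_sub_le _ _).trans
        apply max_le
        · apply (Polynomial.natDegree_mul_le).trans
          have : (Polynomial.C 2 * Polynomial.X : PR).natDegree ≤ 1 :=
            (Polynomial.natDegree_mul_le).trans (by simp)
          omega
        · apply (Polynomial.natDegree_mul_le).trans
          rw [Polynomial.natDegree_C, h0d]
          omega
      constructor
      · apply le_antisymm hdegle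
        apply Polynomial.le_natDegree_of_ne_zero
        rw [hco]
        positivity
      · exact hco

lemma hermN_natDegree (n : ℕ) : (hermN n).natDegree = n := (hermN_deg n).1

lemma hermN_leadingCoeff (n : ℕ) : (hermN n).leadingCoeff = 2^n := by
  rw [Polynomial.leadingCoeff, hermN_natDegree, (hermN_deg n).2]

lemma hermN_ne_zero (n : ℕ) : hermN n ≠ 0 := by
  intro h
  have h2 := hermN_leadingCoeff n
  rw [h, Polynomial.leadingCoeff_zero] at h2
  have h3 : (0:ℝ) < 2^n := by positivity
  rw [← h2] at h3
  exact lt_irrefl 0 h3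

/-- antiderivative of a polynomial -/
def antider (p : PR) : PR :=
  ∑ n ∈ range (p.natDegree + 1), Polynomial.C (p.coeff n / (n+1)) * Polynomial.X^(n+1)

lemma deriv_antider (p : PR) : Polynomial.derivative (antider p) = p := by
  unfold antider
  rw [map_sum]
  have : ∀ n ∈ range (p.natDegree + 1),
      Polynomial.derivative (Polynomial.C (p.coeff n / (n+1)) * Polynomial.X^(n+1))
        = Polynomial.C (p.coeff n) * Polynomial.X^n := by
    intro n _
    rw [Polynomial.derivative_C_mul, Polynomial.derivative_X_pow, ← mul_assoc]
    congr 1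
    · rw [← Polynomial.C_mul]
      congr 1
      push_cast
      field_simp
  rw [Finset.sum_congr rfl this]
  conv_rhs => rw [Polynomial.as_sum_range' p (p.natDegree + 1) (Nat.lt_succ_self _)]
  apply Finset.sum_congr rfl
  intro n _
  rw [Polynomial.C_mul_X_pow_eq_monomial]

lemma herm_span (p : PR) : p ∈ Submodule.span ℝ (Set.range hermN) := by
  generalize hn : p.natDegree = n
  induction n using Nat.strong_induction_on generalizing p with
  | _ n ih =>
    by_cases hp : p = 0
    · rw [hp]; exact Submodule.zero_mem _
    rcases Nat.eq_zero_or_pos n with h0 | hpos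
    · have hpc : p = Polynomial.C (p.coeff 0) :=
        Polynomial.eq_C_of_natDegree_eq_zero (hn.trans h0)
      rw [hpc]
      have h1 : Polynomial.C (p.coeff 0) = (p.coeff 0) • hermN 0 := by
        simp [hermN, Polynomial.smul_eq_C_mul]
      rw [h1]
      exact Submodule.smul_mem _ _ (Submodule.subset_span ⟨0, rfl⟩)
    · set q : PR := p - Polynomial.C (p.leadingCoeff / 2^n) * hermN n with hq
      have hcq : q.coeff n = 0 := by
        rw [hq, Polynomial.coeff_sub, Polynomial.coeff_C_mul, (hermN_deg n).2]
        rw [← hn, Polynomial.coeff_natDegree]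
        field_simp
        simp
      have hqle : q.natDegree ≤ n := by
        rw [hq]
        apply (Polynomial.natDegree_sub_le _ _).trans
        apply max_le (le_of_eq hn)
        apply (Polynomial.natDegree_mul_le).trans
        simp [hermN_natDegree]
      have hqin : q ∈ Submodule.span ℝ (Set.range hermN) := by
        by_cases hq0 : q = 0
        · rw [hq0]; exact Submodule.zero_mem _
        · have hqlt : q.natDegree < n := by
            rcases Nat.lt_or_ge q.natDegree n with h | h
            · exact h
            · exfalso
              have heq : q.natDegree = n := le_antisymm hqle h
              have := Polynomial.coeff_natDegree (p := q)
              rw [heq, hcq] at this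
              exact hq0 (Polynomial.leadingCoeff_eq_zero.mp this.symm)
          exact ih q.natDegree hqlt q rfl
      have hpq : p = q + Polynomial.C (p.leadingCoeff / 2^n) * hermN n := by
        rw [hq]; ring
      rw [hpq]
      apply Submodule.add_mem _ hqin
      rw [← Polynomial.smul_eq_C_mul]
      exact Submodule.smul_mem _ _ (Submodule.subset_span ⟨n, rfl⟩)

end Stab
namespace Stab
open Polynomial Matrix Finset

lemma descent (F : ℕ → PR) (L : ℕ) (hW : ∀ m, m ≤ L+1 → Wm F m ≠ 0)
    (f q : PR) (hq : Polynomial.derivative f = Wm F (L+1) * q) (g : PR) :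
    ∃ h : PR, Sm F (L+1) h = f * Sm F (L+1) g := by
  set R : ℕ → PR := fun j => antider (q * Vm F (L+1) j g) with hRdef
  have hdR : ∀ j, Polynomial.derivative (R j) = q * Vm F (L+1) j g := by
    intro j; rw [hRdef]; exact deriv_antider _
  set Pp : ℕ → PR := fun i =>
    f * Sm F i g - ∑ j ∈ range (L+1), Sm F i (F j) * R j with hPp
  have hstar : ∀ m, m < L+1 → Wm F (m+1) * Polynomial.derivative (Pp m)
      - Polynomial.derivative (Wm F (m+1)) * Pp m = Wm F m * Pp (m+1) := by
    intro m hm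
    have hWm1 : Wm F (m+1) ≠ 0 := hW (m+1) (by omega)
    set Am := Sm F m g with hAm
    set Am' := Sm F (m+1) g with hAm'
    set W1 := Wm F (m+1) with hW1
    set W0 := Wm F m with hW0
    set Wl := Wm F (L+1) with hWl
    have hJg : W0 * Am' = W1 * Polynomial.derivative Am - Polynomial.derivative W1 * Am :=
      jacobi F m hWm1 g
    have hJF : ∀ j, W0 * Sm F (m+1) (F j)
        = W1 * Polynomial.derivative (Sm F m (F j))
          - Polynomial.derivative W1 * Sm F m (F j) :=
      fun j => jacobi F m hWm1 (F j)
    have hdag : ∑ j ∈ range (L+1), Vm F (L+1) j g * Sm F m (F j) = Wl * Am :=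
      dagger F L m (by omega) (hW (L+1) le_rfl) g
    have hdP : Polynomial.derivative (Pp m)
        = Polynomial.derivative f * Am + f * Polynomial.derivative Am
          - ((∑ j ∈ range (L+1), Polynomial.derivative (Sm F m (F j)) * R j)
            + ∑ j ∈ range (L+1), Sm F m (F j) * (q * Vm F (L+1) j g)) := by
      simp only [hPp]
      rw [Polynomial.derivative_sub, Polynomial.derivative_mul, map_sum]
      congr 1
      rw [Finset.sum_congr rfl (fun j _ => by
        rw [Polynomial.derivative_mul, hdR j] :
        ∀ j ∈ range (L+1), Polynomial.derivative (Sm F m (F j) * R j)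
          = Polynomial.derivative (Sm F m (F j)) * R j
            + Sm F m (F j) * (q * Vm F (L+1) j g))]
      rw [Finset.sum_add_distrib]
    have e2 : W1 * (∑ j ∈ range (L+1), Polynomial.derivative (Sm F m (F j)) * R j)
        - Polynomial.derivative W1 * (∑ j ∈ range (L+1), Sm F m (F j) * R j)
        = W0 * ∑ j ∈ range (L+1), Sm F (m+1) (F j) * R j := by
      rw [Finset.mul_sum, Finset.mul_sum, Finset.mul_sum, ← Finset.sum_sub_distrib]
      apply Finset.sum_congr rfl
      intro j _
      linear_combination (-(R j)) * hJF j
    have e3 : ∑ j ∈ range (L+1), Sm F m (F j) * (q * Vm F (L+1) j g)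
        = q * (Wl * Am) := by
      rw [← hdag, Finset.mul_sum]
      apply Finset.sum_congr rfl
      intro j _
      ring
    rw [hdP]
    simp only [hPp]
    rw [e3]
    linear_combination Am * W1 * hq - f * hJg - e2
  have hup : ∀ i, i ≤ L+1 → Sm F i (Pp 0) = Pp i := by
    intro i
    induction i with
    | zero =>
      intro _
      rw [Sm_zero_fam]
    | succ m ih =>
      intro hi
      have hm : m < L+1 := by omega
      have hJ := jacobi F m (hW (m+1) (by omega)) (Pp 0)
      rw [ih (by omega)] at hJ
      rw [hstar m hm] at hJ
      exact mul_left_cancel₀ (hW m (by omega)) hJ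
  refine ⟨Pp 0, (hup (L+1) le_rfl).trans ?_⟩
  simp only [hPp]
  rw [Finset.sum_eq_zero (fun j hj => by
    rw [Sm_dup F (L+1) (Finset.mem_range.mp hj), zero_mul])]
  rw [sub_zero]

end Stab
namespace Stab
open Polynomial Matrix Finset

lemma Herm_natCast (n : ℕ) : Herm (n : ℤ) = hermN n := by
  unfold Herm
  rw [if_pos (by positivity), Int.toNat_natCast]

/-- `Sm` as a linear map -/
def Tlin (F : ℕ → PR) (l : ℕ) : PR →ₗ[ℝ] PR where
  toFun := Sm F l
  map_add' := by
    intro a b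
    rw [Sm_op, Sm_op, Sm_op, ← Finset.sum_add_distrib]
    apply Finset.sum_congr rfl
    intro j _
    rw [dv_add]
    ring
  map_smul' := by
    intro c b
    simp only [RingHom.id_apply]
    rw [Sm_op, Sm_op, Finset.smul_sum]
    apply Finset.sum_congr rfl
    intro j _
    rw [dv_smul, mul_smul_comm]

lemma Tlin_apply (F : ℕ → PR) (l : ℕ) (b : PR) : Tlin F l b = Sm F l b := rfl

lemma etaP_eq (k : ℕ → ℕ) (l : ℕ) :
    etaP k l = Wm (fun t => hermN (k (t+1))) l := by
  unfold etaP WrP Wm jetM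
  congr 1

lemma hhat_eq (k : ℕ → ℕ) (l : ℕ) (n : ℤ) :
    hhatP k l n = Sm (fun t => hermN (k (t+1))) l (Herm (n + l - Nval k l)) := by
  unfold hhatP WrP Sm Wm jetM
  congr 1

lemma U_eq_range (k : ℕ → ℕ) (l : ℕ) :
    Uspan k l = LinearMap.range (Tlin (fun t => hermN (k (t+1))) l) := by
  set F : ℕ → PR := fun t => hermN (k (t+1)) with hF
  apply le_antisymm
  · rw [Uspan, Submodule.span_le]
    rintro p ⟨n, _, rfl⟩
    exact ⟨Herm (n + l - Nval k l), (hhat_eq k l n).symm⟩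
  · rintro p ⟨g, rfl⟩
    have hg : g ∈ Submodule.span ℝ (Set.range hermN) := herm_span g
    have hmap : Tlin F l g ∈ Submodule.map (Tlin F l) (Submodule.span ℝ (Set.range hermN)) :=
      ⟨g, hg, rfl⟩
    rw [Submodule.map_span] at hmap
    refine Submodule.span_le.mpr ?_ hmap
    rintro x ⟨y, ⟨mm, rfl⟩, rfl⟩
    by_cases hcase : ∃ j, j < l ∧ mm = k (j+1)
    · obtain ⟨j, hj, rfl⟩ := hcase
      have : Tlin F l (hermN (k (j+1))) = 0 := by
        rw [Tlin_apply]
        exact Sm_dup F l hj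
      rw [this]
      exact Submodule.zero_mem _
    · push_neg at hcase
      set n : ℤ := (mm : ℤ) + Nval k l - l with hn
      have harith : n + l - Nval k l = (mm : ℤ) := by omega
      have hIset : n ∈ Iset k l := by
        constructor
        · have : (0:ℤ) ≤ (mm : ℤ) := by positivity
          omega
        · intro i h1i hil
          rw [harith]
          intro hcon
          have : mm = k i := by exact_mod_cast hcon
          exact hcase (i-1) (by omega) (by rw [this]; congr 1; omega)
      have : hhatP k l n = Tlin F l (hermN mm) := by
        rw [hhat_eq, harith, Herm_natCast, Tlin_apply]
      rw [← this]
      exact Submodule.subset_span ⟨n, hIset, rfl⟩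

end Stab

open Stab in
/-- If `f'` is divisible by `η` then `f` stabilizes `U`. -/
theorem stmt_11 (l : ℕ) (hl : 1 ≤ l) (k : ℕ → ℕ) (hk1 : 1 ≤ k 1)
    (hmono : ∀ i, 1 ≤ i → i < l → k i < k (i + 1))
    (f : Polynomial ℝ) (hf : etaP k l ∣ Polynomial.derivative f) :
    ∀ p ∈ Uspan k l, f * p ∈ Uspan k l := by
  intro p hp
  obtain ⟨L, rfl⟩ : ∃ L, l = L + 1 := ⟨l - 1, by omega⟩
  set F : ℕ → PR := fun t => hermN (k (t+1)) with hF
  have kmono : ∀ i j, 1 ≤ i → i < j → j ≤ L+1 → k i < k j := by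
    intro i j h1 h2 h3
    induction j with
    | zero => omega
    | succ jj ih =>
      rcases Nat.lt_or_ge i jj with h | h
      · exact lt_trans (ih h (by omega)) (hmono jj (by omega) (by omega))
      · have : i = jj := by omega
        subst this
        exact hmono i h1 (by omega)
  have hWne : ∀ m, m ≤ L+1 → Wm F m ≠ 0 := by
    intro m hm
    apply Wm_ne_zero F (fun t => k (t+1)) m
    · intro t _; exact hermN_natDegree _
    · intro t _; exact hermN_ne_zero _
    · intro s t hst htm
      exact kmono (s+1) (t+1) (by omega) (by omega) (by omega)
  rw [U_eq_range k (L+1)] at hp ⊢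
  obtain ⟨g, rfl⟩ := hp
  rw [etaP_eq] at hf
  obtain ⟨q, hq⟩ := hf
  obtain ⟨h, hh⟩ := descent F L hWne f q hq g
  exact ⟨h, by rw [Tlin_apply, hh, Tlin_apply]⟩
end
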